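/- arXiv:2401.14231 — 2 statements merged into one kernel-verified Lean document; each statement's English description precedes it below -/
import Mathlib

section
/- For all natural numbers n ≥ 0 the following identities of integers hold: h(9n) = h(9n+6) = −h(n) + 2·h(3n); h(9n+1) = h(9n+4) = h(9n+7) = h(n) + 1 = −h(n) + h(3n) + h(3n+1); h(9n+3) = −h(n) + 2·h(3n+1); and h(3n+2) = h(n) + (n mod 2). -/
/-- `h 0 = 0`; for `n > 0`, `h n = h (n / 9) + 1` if `n ≡ 1 (mod 3)`,
and `h n = h (n / 3) + (n / 3) % 2` otherwise. -/
def h : ℕ → ℕ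
  | 0 => 0
  | (n + 1) =>
    if (n + 1) % 3 = 1 then h ((n + 1) / 9) + 1
    else h ((n + 1) / 3) + ((n + 1) / 3) % 2
  decreasing_by
  · exact Nat.div_lt_self (Nat.succ_pos n) (by norm_num)
  · exact Nat.div_lt_self (Nat.succ_pos n) (by norm_num)

lemma h_succ (n : ℕ) : h (n+1) = if (n+1) % 3 = 1 then h ((n+1)/9) + 1
    else h ((n+1)/3) + ((n+1)/3) % 2 := by rw [h]

lemma h_pos (n : ℕ) (hn : 0 < n) : h n = if n % 3 = 1 then h (n/9) + 1
    else h (n/3) + (n/3) % 2 := by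
  obtain ⟨m, rfl⟩ := Nat.exists_eq_succ_of_ne_zero hn.ne'
  exact h_succ m

lemma h32 (n : ℕ) : h (3*n+2) = h n + n % 2 := by
  rw [h_pos (3*n+2) (by omega)]
  have h1 : (3*n+2) % 3 = 2 := by omega
  have h2 : (3*n+2) / 3 = n := by omega
  simp [h1, h2]

lemma h30' (n : ℕ) : h (3*n) = h n + n % 2 := by
  rcases Nat.eq_zero_or_pos n with rfl | hn
  · simp [h]
  rw [h_pos (3*n) (by omega)]
  have h1 : (3*n) % 3 = 0 := by omega
  have h2 : (3*n) / 3 = n := by omega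
  simp [h1, h2]

lemma h31 (n : ℕ) : h (3*n+1) = h n + (n+1) % 2 := by
  induction n using Nat.strong_induction_on with
  | _ n ih =>
    obtain ⟨m, r, hr, rfl⟩ : ∃ m r, r < 3 ∧ n = 3*m+r := ⟨n/3, n%3, Nat.mod_lt _ (by norm_num), by omega⟩
    interval_cases r
    · -- n = 3m, 3n+1 = 9m+1
      rw [show 3*(3*m+0)+1 = 9*m+1 by ring, h_pos _ (by omega)]
      have h1 : (9*m+1) % 3 = 1 := by omega
      have h2 : (9*m+1) / 9 = m := by omega
      rw [if_pos h1, h2]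
      rcases Nat.eq_zero_or_pos m with rfl | hm
      · simp [h]
      simp only [Nat.add_zero]
      rw [h30']
      omega
    · -- n = 3m+1, 3n+1 = 9m+4
      rw [show 3*(3*m+1)+1 = 9*m+4 by ring, h_pos _ (by omega)]
      have h1 : (9*m+4) % 3 = 1 := by omega
      have h2 : (9*m+4) / 9 = m := by omega
      rw [if_pos h1, h2, ih m (by omega)]
      omega
    · -- n = 3m+2, 3n+1 = 9m+7
      rw [show 3*(3*m+2)+1 = 9*m+7 by ring, h_pos _ (by omega)]
      have h1 : (9*m+7) % 3 = 1 := by omega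
      have h2 : (9*m+7) / 9 = m := by omega
      rw [if_pos h1, h2, h32]
      omega

theorem stmt_13 (n : ℕ) :
    (h (9 * n) : ℤ) = h (9 * n + 6) ∧
    (h (9 * n) : ℤ) = -(h n : ℤ) + 2 * h (3 * n) ∧
    (h (9 * n + 1) : ℤ) = h (9 * n + 4) ∧
    (h (9 * n + 1) : ℤ) = h (9 * n + 7) ∧
    (h (9 * n + 1) : ℤ) = (h n : ℤ) + 1 ∧
    (h (9 * n + 1) : ℤ) = -(h n : ℤ) + h (3 * n) + h (3 * n + 1) ∧
    (h (9 * n + 3) : ℤ) = -(h n : ℤ) + 2 * h (3 * n + 1) ∧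
    (h (3 * n + 2) : ℤ) = (h n : ℤ) + n % 2 := by
  have e1 : h (9*n) = h n + n % 2 + n % 2 := by
    rw [show 9*n = 3*(3*n) by ring, h30', h30']; omega
  have e2 : h (9*n+6) = h n + n % 2 + n % 2 := by
    rw [show 9*n+6 = 3*(3*n+2) by ring, h30', h32]; omega
  have e3 : h (9*n+1) = h n + 1 := by
    rw [h_pos _ (by omega), if_pos (by omega : (9*n+1) % 3 = 1),
      show (9*n+1)/9 = n by omega]
  have e4 : h (9*n+4) = h n + 1 := by
    rw [h_pos _ (by omega), if_pos (by omega : (9*n+4) % 3 = 1),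
      show (9*n+4)/9 = n by omega]
  have e5 : h (9*n+7) = h n + 1 := by
    rw [h_pos _ (by omega), if_pos (by omega : (9*n+7) % 3 = 1),
      show (9*n+7)/9 = n by omega]
  have e6 : h (9*n+3) = h n + (n+1) % 2 + (n+1) % 2 := by
    rw [show 9*n+3 = 3*(3*n+1) by ring, h30', h31]; omega
  have e7 := h30' n
  have e8 := h31 n
  have e9 := h32 n
  refine ⟨?_, ?_, ?_, ?_, ?_, ?_, ?_, ?_⟩ <;> omega
end

section
/- For all natural numbers r < t and all real coefficients c₀, c₁, it is NOT the case that h(3^t·n) = c₀·h(3^r·n) + c₁·h(3^r·n + 1) holds for all n ≥ 0. Consequently, the sequence (h(n))_{n ≥ 0} is not strongly 3-recursive. -/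
lemma h_eq (n : ℕ) (hn : 0 < n) : h n = if n % 3 = 1 then h (n / 9) + 1
    else h (n / 3) + (n / 3) % 2 := by
  obtain ⟨m, rfl⟩ := Nat.exists_eq_add_of_lt hn
  simp only [Nat.zero_add]
  rw [h]

lemma h_pow3 (k : ℕ) : h (3 ^ k) = k + 1 := by
  induction k with
  | zero => simp [h_eq 1 one_pos, h]
  | succ k ih =>
    rw [h_eq]
    · have h1 : 3 ^ (k+1) % 3 = 0 := by
        simp [pow_succ, Nat.mul_mod_left]
      have h2 : 3 ^ (k+1) / 3 = 3 ^ k := by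
        rw [pow_succ]; exact Nat.mul_div_cancel _ (by norm_num)
      rw [h1] at *
      simp [h2, ih, Nat.pow_mod]
    · positivity

theorem stmt_15 (r t : ℕ) (hrt : r < t) (c₀ c₁ : ℝ) :
    ¬ (∀ n : ℕ, (h (3 ^ t * n) : ℝ) =
        c₀ * h (3 ^ r * n) + c₁ * h (3 ^ r * n + 1)) := by
  intro H
  have h0 := H 0
  have h1 := H 1
  have h3 := H 3
  have e1 : h 1 = 1 := by simpa using h_pow3 0
  simp only [Nat.mul_zero, Nat.zero_add, h, e1] at h0
  -- h0 : 0 = c₀ * 0 + c₁ * 1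
  have hc1 : c₁ = 0 := by
    push_cast at h0; linarith
  rw [Nat.mul_one, Nat.mul_one, h_pow3, h_pow3, hc1] at h1
  have e3t : 3 ^ t * 3 = 3 ^ (t+1) := by ring
  have e3r : 3 ^ r * 3 = 3 ^ (r+1) := by ring
  rw [e3t, e3r, h_pow3, h_pow3, hc1] at h3
  push_cast at h1 h3
  have hr : (r:ℝ) < t := by exact_mod_cast hrt
  nlinarith [h1, h3]
end
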